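/- Let m, n, s and p_1,…,p_s be positive integers, δ ≥ 0, w ∈ ℝ^m, and for each k ∈ {1,…,s} let L^{(k)}, U^{(k)} ∈ ℝ^{p_k} and q^{(k)} ∈ [0,1]^{m×p_k} with rows summing to 1. Consider the polytope P := {x ∈ ℝ^m : 0 ≤ x_i ≤ 1 for all i, ∑_{i=1}^m x_i = n, and for all k and ℓ ∈ {1,…,p_k}, L^{(k)}_ℓ − δn ≤ ∑_{i=1}^m q^{(k)}_{iℓ} x_i ≤ U^{(k)}_ℓ + δn}. If P is nonempty, then there exists x ∈ P such that ∑_i w_i x_i ≥ ∑_i w_i y_i for every y ∈ P, and x has at most min(m, 1 + ∑_{k=1}^s (p_k − 1)) fractional coordinates. -/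

import Mathlib

private lemma improve_step (m n : ℕ) {s : ℕ} {p : Fin s → ℕ}
    (δ : ℝ) (w : Fin m → ℝ) (L U : ∀ k : Fin s, Fin (p k) → ℝ)
    (q : ∀ k : Fin s, Fin m → Fin (p k) → ℝ)
    (P : Set (Fin m → ℝ))
    (hP : P = {x | (∀ i, 0 ≤ x i ∧ x i ≤ 1) ∧ (∑ i, x i = (n : ℝ)) ∧
      ∀ (k : Fin s) (ℓ : Fin (p k)),
        L k ℓ - δ * n ≤ ∑ i, q k i ℓ * x i ∧ ∑ i, q k i ℓ * x i ≤ U k ℓ + δ * n})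
    (x : Fin m → ℝ) (hxP : x ∈ P)
    (hxmax : ∀ y ∈ P, ∑ i, w i * y i ≤ ∑ i, w i * x i)
    (d : Fin m → ℝ)
    (hsupp : ∀ i, d i ≠ 0 → 0 < x i ∧ x i < 1)
    (hdsum : ∑ i, d i = 0)
    (hdq : ∀ k ℓ, ∑ i, q k i ℓ * d i = 0)
    (hwd : 0 ≤ ∑ i, w i * d i)
    (hdne : ∃ i, d i ≠ 0) :
    ∃ x', x' ∈ P ∧ (∀ y ∈ P, ∑ i, w i * y i ≤ ∑ i, w i * x' i) ∧
      {i | 0 < x' i ∧ x' i < 1}.ncard < {i | 0 < x i ∧ x i < 1}.ncard := by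
  classical
  rw [hP] at hxP
  obtain ⟨hbd, hsum, hcon⟩ := hxP
  set S : Finset (Fin m) := Finset.univ.filter (fun i => d i ≠ 0) with hS
  have hSne : S.Nonempty := by
    obtain ⟨i, hi⟩ := hdne
    exact ⟨i, by simp [hS, hi]⟩
  set step : Fin m → ℝ := fun i => if d i < 0 then x i / (-d i) else (1 - x i) / (d i)
    with hstep
  set t : ℝ := S.inf' hSne step with ht
  have hmemS : ∀ i ∈ S, d i ≠ 0 := fun i hi => (Finset.mem_filter.mp hi).2
  have ht0 : 0 < t := by
    rw [ht, Finset.lt_inf'_iff]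
    intro i hi
    have hdi := hmemS i hi
    obtain ⟨h0, h1⟩ := hsupp i hdi
    by_cases hlt : d i < 0
    · simp only [hstep, if_pos hlt]
      exact div_pos h0 (by linarith)
    · have hpos : 0 < d i := lt_of_le_of_ne (not_lt.mp hlt) (Ne.symm hdi)
      simp only [hstep, if_neg hlt]
      exact div_pos (by linarith) hpos
  set x' : Fin m → ℝ := fun i => x i + t * d i with hx'
  -- expansion helper
  have expand : ∀ (c : Fin m → ℝ),
      ∑ i, c i * x' i = ∑ i, c i * x i + t * ∑ i, c i * d i := by
    intro c
    rw [Finset.mul_sum, ← Finset.sum_add_distrib]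
    exact Finset.sum_congr rfl fun i _ => by simp [hx']; ring
  -- bounds
  have hbd' : ∀ i, 0 ≤ x' i ∧ x' i ≤ 1 := by
    intro i
    by_cases hdi : d i = 0
    · simp [hx', hdi]; exact hbd i
    · obtain ⟨h0, h1⟩ := hsupp i hdi
      have hiS : i ∈ S := by simp [hS, hdi]
      have htle : t ≤ step i := Finset.inf'_le step hiS
      by_cases hlt : d i < 0
      · have hstepi : step i = x i / (-d i) := by simp [hstep, hlt]
        rw [hstepi] at htle
        have : t * (-d i) ≤ x i := (le_div_iff₀ (by linarith)).mp htle
        have h2 : t * d i ≤ 0 := mul_nonpos_of_nonneg_of_nonpos ht0.le hlt.le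
        constructor <;> simp only [hx'] <;> nlinarith
      · have hpos : 0 < d i := lt_of_le_of_ne (not_lt.mp hlt) (Ne.symm hdi)
        have hstepi : step i = (1 - x i) / d i := by simp [hstep, hlt]
        rw [hstepi] at htle
        have : t * d i ≤ 1 - x i := (le_div_iff₀ hpos).mp htle
        have h2 : 0 ≤ t * d i := mul_nonneg ht0.le hpos.le
        constructor <;> simp only [hx'] <;> nlinarith
  have hsum' : ∑ i, x' i = (n : ℝ) := by
    simp only [hx']
    rw [Finset.sum_add_distrib, ← Finset.mul_sum, hdsum, mul_zero, add_zero, hsum]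
  have hcon' : ∀ (k : Fin s) (ℓ : Fin (p k)),
      L k ℓ - δ * n ≤ ∑ i, q k i ℓ * x' i ∧ ∑ i, q k i ℓ * x' i ≤ U k ℓ + δ * n := by
    intro k ℓ
    have := expand (fun i => q k i ℓ)
    rw [this, hdq k ℓ, mul_zero, add_zero]
    exact hcon k ℓ
  have hx'P : x' ∈ P := by rw [hP]; exact ⟨hbd', hsum', hcon'⟩
  have hobj : ∑ i, w i * x i ≤ ∑ i, w i * x' i := by
    rw [expand w]
    nlinarith
  refine ⟨x', hx'P, fun y hy => le_trans (hxmax y hy) hobj, ?_⟩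
  -- fractional sets
  have hsub : {i | 0 < x' i ∧ x' i < 1} ⊆ {i | 0 < x i ∧ x i < 1} := by
    intro i hi
    by_contra hni
    have hd0 : d i = 0 := by
      by_contra h
      exact hni (hsupp i h)
    have : x' i = x i := by simp [hx', hd0]
    rw [Set.mem_setOf_eq, this] at hi
    exact hni hi
  obtain ⟨i₀, hi₀S, hti₀⟩ := Finset.exists_mem_eq_inf' hSne step
  have htt : t = step i₀ := ht.trans hti₀
  have hdi₀ := hmemS i₀ hi₀S
  have hFi₀ : i₀ ∈ {i | 0 < x i ∧ x i < 1} := hsupp i₀ hdi₀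
  have hnoti₀ : i₀ ∉ {i | 0 < x' i ∧ x' i < 1} := by
    by_cases hlt : d i₀ < 0
    · have : x' i₀ = 0 := by
        simp only [hx', htt, hstep, if_pos hlt]
        field_simp [hdi₀]
        ring
      simp [Set.mem_setOf_eq, this]
    · have hpos : 0 < d i₀ := lt_of_le_of_ne (not_lt.mp hlt) (Ne.symm hdi₀)
      have : x' i₀ = 1 := by
        simp only [hx', htt, hstep, if_neg hlt]
        field_simp [hdi₀]
        ring
      simp [Set.mem_setOf_eq, this]
  exact Set.ncard_lt_ncard ((Set.ssubset_iff_of_subset hsub).mpr ⟨i₀, hFi₀, hnoti₀⟩)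
    (Set.toFinite _)

/-- **Existence of a basic feasible optimal solution (multiple protected attributes).**
If the denoised LP polytope is nonempty, there is a maximizer of the linear objective
`wᵀx` over it with at most `min m (1 + ∑ k (p k − 1))` fractional coordinates. -/
theorem stmt9 (m n s : ℕ) (hm : 0 < m) (hn : 0 < n) (hs : 0 < s)
    (p : Fin s → ℕ) (hp : ∀ k, 0 < p k)
    (δ : ℝ) (hδ : 0 ≤ δ) (w : Fin m → ℝ)
    (L U : ∀ k : Fin s, Fin (p k) → ℝ)
    (q : ∀ k : Fin s, Fin m → Fin (p k) → ℝ)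
    (hq : ∀ k i ℓ, q k i ℓ ∈ Set.Icc (0 : ℝ) 1)
    (hqsum : ∀ k i, ∑ ℓ, q k i ℓ = 1)
    (P : Set (Fin m → ℝ))
    (hP : P = {x | (∀ i, 0 ≤ x i ∧ x i ≤ 1) ∧ (∑ i, x i = (n : ℝ)) ∧
      ∀ (k : Fin s) (ℓ : Fin (p k)),
        L k ℓ - δ * n ≤ ∑ i, q k i ℓ * x i ∧ ∑ i, q k i ℓ * x i ≤ U k ℓ + δ * n})
    (hPne : P.Nonempty) :
    ∃ x ∈ P, (∀ y ∈ P, ∑ i, w i * y i ≤ ∑ i, w i * x i) ∧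
      {i | 0 < x i ∧ x i < 1}.ncard ≤ min m (1 + ∑ k, (p k - 1)) := by
  classical
  -- compactness and existence of a maximizer
  have hsub : P ⊆ Set.pi Set.univ (fun _ : Fin m => Set.Icc (0:ℝ) 1) := by
    intro y hy
    rw [hP] at hy
    intro i _
    exact ⟨(hy.1 i).1, (hy.1 i).2⟩
  have hclosed : IsClosed P := by
    rw [hP]
    have e : {x : Fin m → ℝ | (∀ i, 0 ≤ x i ∧ x i ≤ 1) ∧ (∑ i, x i = (n : ℝ)) ∧
        ∀ (k : Fin s) (ℓ : Fin (p k)),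
          L k ℓ - δ * n ≤ ∑ i, q k i ℓ * x i ∧ ∑ i, q k i ℓ * x i ≤ U k ℓ + δ * n}
        = (⋂ i, {x : Fin m → ℝ | 0 ≤ x i} ∩ {x | x i ≤ 1}) ∩
          ({x : Fin m → ℝ | ∑ i, x i = (n : ℝ)} ∩
          (⋂ k, ⋂ ℓ, {x : Fin m → ℝ | L k ℓ - δ * n ≤ ∑ i, q k i ℓ * x i} ∩
            {x | ∑ i, q k i ℓ * x i ≤ U k ℓ + δ * n})) := by
      ext x
      simp only [Set.mem_setOf_eq, Set.mem_inter_iff, Set.mem_iInter]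
      try tauto
    rw [e]
    have hc : ∀ (c : Fin m → ℝ), Continuous (fun x : Fin m → ℝ => ∑ i, c i * x i) :=
      fun c => continuous_finset_sum _ fun i _ => continuous_const.mul (continuous_apply i)
    refine IsClosed.inter ?_ (IsClosed.inter ?_ ?_)
    · exact isClosed_iInter fun i =>
        (isClosed_le continuous_const (continuous_apply i)).inter
        (isClosed_le (continuous_apply i) continuous_const)
    · exact isClosed_eq (continuous_finset_sum _ fun i _ => continuous_apply i) continuous_const
    · exact isClosed_iInter fun k => isClosed_iInter fun ℓ =>
        (isClosed_le continuous_const (hc _)).inter (isClosed_le (hc _) continuous_const)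
  have hPc : IsCompact P :=
    IsCompact.of_isClosed_subset (isCompact_univ_pi fun _ => isCompact_Icc) hclosed hsub
  have hwc : Continuous (fun x : Fin m → ℝ => ∑ i, w i * x i) :=
    continuous_finset_sum _ fun i _ => continuous_const.mul (continuous_apply i)
  obtain ⟨x₀, hx₀P, hx₀max⟩ := hPc.exists_isMaxOn hPne hwc.continuousOn
  -- minimal fractional count among maximizers
  set g : (Fin m → ℝ) → ℕ := fun x => {i | 0 < x i ∧ x i < 1}.ncard with hg
  set M : Set (Fin m → ℝ) :=
    {x | x ∈ P ∧ ∀ y ∈ P, ∑ i, w i * y i ≤ ∑ i, w i * x i} with hM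
  have hMne : M.Nonempty := ⟨x₀, hx₀P, fun y hy => hx₀max hy⟩
  obtain ⟨x, hxM, hxc⟩ := Nat.sInf_mem (hMne.image g)
  refine ⟨x, hxM.1, hxM.2, le_min ?_ ?_⟩
  · have h1 : {i | 0 < x i ∧ x i < 1}.ncard ≤ (Set.univ : Set (Fin m)).ncard :=
      Set.ncard_le_ncard (Set.subset_univ _) Set.finite_univ
    simpa [Set.ncard_univ] using h1
  · by_contra hgt
    push_neg at hgt
    set F : Set (Fin m) := {i | 0 < x i ∧ x i < 1} with hF
    haveI : Fintype ↥F := F.toFinite.fintype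
    have hcardF : Fintype.card ↥F = F.ncard := by
      rw [← Nat.card_coe_set_eq, Nat.card_eq_fintype_card]
    -- the constraint-vector family
    set v : ↥F → ℝ × (∀ k : Fin s, ({ℓ : Fin (p k) // ℓ ≠ ⟨0, hp k⟩} → ℝ)) :=
      fun i => (1, fun k ℓ => q k (↑i) (↑ℓ)) with hv
    have hfr : Module.finrank ℝ
        (ℝ × (∀ k : Fin s, ({ℓ : Fin (p k) // ℓ ≠ ⟨0, hp k⟩} → ℝ)))
        = 1 + ∑ k, (p k - 1) := by
      rw [Module.finrank_prod, Module.finrank_self, Module.finrank_pi_fintype]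
      congr 1
      refine Finset.sum_congr rfl fun k _ => ?_
      rw [Module.finrank_pi]
      rw [Fintype.card_subtype_compl, Fintype.card_subtype_eq, Fintype.card_fin]
    have hnli : ¬ LinearIndependent ℝ v := by
      intro h
      have := h.fintype_card_le_finrank
      rw [hfr, hcardF] at this
      omega
    obtain ⟨c, hcsum, i₁, hi₁⟩ := Fintype.not_linearIndependent_iff.mp hnli
    -- extract component equations
    have h1 : ∑ i : ↥F, c i = 0 := by
      have := congrArg Prod.fst hcsum
      simpa [hv, Prod.fst_sum] using this
    have h2 : ∀ (k : Fin s) (ℓ : Fin (p k)) (hℓ : ℓ ≠ ⟨0, hp k⟩),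
        ∑ i : ↥F, c i * q k (↑i) ℓ = 0 := by
      intro k ℓ hℓ
      have := congrArg (fun z : ℝ × (∀ k : Fin s, ({ℓ : Fin (p k) // ℓ ≠ ⟨0, hp k⟩} → ℝ)) => z.2 k ⟨ℓ, hℓ⟩) hcsum
      simpa [hv, Prod.snd_sum, Finset.sum_apply] using this
    -- the direction
    set d : Fin m → ℝ := fun i => if h : i ∈ F then c ⟨i, h⟩ else 0 with hd
    have hsum_d : ∀ (f : Fin m → ℝ), ∑ i, f i * d i = ∑ i : ↥F, f ↑i * c i := by
      intro f
      rw [← Finset.sum_subset (Finset.subset_univ F.toFinset)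
        (fun i _ hi => by
          have : i ∉ F := by simpa using hi
          simp [hd, this])]
      rw [Finset.sum_subtype F.toFinset (fun i => Set.mem_toFinset) (fun i => f i * d i)]
      refine Finset.sum_congr rfl fun i _ => ?_
      simp [hd, i.2]
    have hdsupp : ∀ i, d i ≠ 0 → 0 < x i ∧ x i < 1 := by
      intro i hi
      by_contra hni
      have : i ∉ F := hni
      simp [hd, this] at hi
    have hdsum : ∑ i, d i = 0 := by
      have : ∑ i, d i = ∑ i, (fun _ => (1:ℝ)) i * d i := by simp
      rw [this, hsum_d]
      simpa using h1
    have hne0 : ∀ (k : Fin s) (ℓ : Fin (p k)), ℓ ≠ ⟨0, hp k⟩ →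
        ∑ i, q k i ℓ * d i = 0 := by
      intro k ℓ hℓ
      rw [hsum_d]
      simpa [mul_comm] using h2 k ℓ hℓ
    have hdq : ∀ (k : Fin s) (ℓ : Fin (p k)), ∑ i, q k i ℓ * d i = 0 := by
      intro k ℓ
      by_cases hℓ : ℓ = ⟨0, hp k⟩
      · subst hℓ
        have htot : ∑ ℓ' : Fin (p k), ∑ i, q k i ℓ' * d i = 0 := by
          rw [Finset.sum_comm]
          have : ∀ i : Fin m, ∑ ℓ' : Fin (p k), q k i ℓ' * d i = d i := by
            intro i
            rw [← Finset.sum_mul, hqsum, one_mul]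
          rw [Finset.sum_congr rfl fun i _ => this i]
          exact hdsum
        have herase : ∑ ℓ' ∈ Finset.univ.erase (⟨0, hp k⟩ : Fin (p k)),
            (∑ i, q k i ℓ' * d i) = 0 :=
          Finset.sum_eq_zero fun ℓ' hℓ' => hne0 k ℓ' (Finset.mem_erase.mp hℓ').1
        have := Finset.add_sum_erase Finset.univ
          (fun ℓ' : Fin (p k) => ∑ i, q k i ℓ' * d i) (Finset.mem_univ (⟨0, hp k⟩ : Fin (p k)))
        rw [herase, add_zero] at this
        exact this.trans htot
      · exact hne0 k ℓ hℓ
    have hdne : ∃ i, d i ≠ 0 := by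
      refine ⟨↑i₁, ?_⟩
      simpa [hd, i₁.2] using hi₁
    -- fix the sign of the objective along d, then improve
    have key : ∃ x', x' ∈ P ∧ (∀ y ∈ P, ∑ i, w i * y i ≤ ∑ i, w i * x' i) ∧
        {i | 0 < x' i ∧ x' i < 1}.ncard < {i | 0 < x i ∧ x i < 1}.ncard := by
      rcases le_total 0 (∑ i, w i * d i) with hsgn | hsgn
      · exact improve_step m n δ w L U q P hP x hxM.1 hxM.2 d hdsupp hdsum hdq hsgn hdne
      · refine improve_step m n δ w L U q P hP x hxM.1 hxM.2 (fun i => -(d i))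
          (fun i hi => hdsupp i (by simpa using hi)) (by simpa using hdsum)
          (fun k ℓ => by simpa using hdq k ℓ) ?_ ?_
        · have : ∑ i, w i * -(d i) = -∑ i, w i * d i := by
            rw [← Finset.sum_neg_distrib]
            exact Finset.sum_congr rfl fun i _ => by ring
          rw [this]
          linarith
        · obtain ⟨i, hi⟩ := hdne
          exact ⟨i, by simpa using hi⟩
    obtain ⟨x', hx'P, hx'max, hx'lt⟩ := key
    have hle : sInf (g '' M) ≤ g x' := Nat.sInf_le ⟨x', ⟨hx'P, hx'max⟩, rfl⟩
    rw [← hxc] at hle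
    have h3 : g x' < g x := hx'lt
    exact absurd hle (not_le.mpr h3)
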